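/- Let u, v, ũ, ṽ be complex numbers of absolute value 1. Then Φ_{G₂}(u,v) = Φ_{G₂}(ũ,ṽ) if and only if the pair (ũ,ṽ) is one of the twelve pairs (u,v), (v,u), (u⁻¹,v⁻¹), (v⁻¹,u⁻¹), (u,(uv)⁻¹), ((uv)⁻¹,u), (v,(uv)⁻¹), ((uv)⁻¹,v), (u⁻¹,uv), (uv,u⁻¹), (v⁻¹,uv), (uv,v⁻¹). -/

import Mathlib

/-- `Φ_{G₂}(u,v) = (u + v + uv + u⁻¹ + v⁻¹ + (uv)⁻¹,
u²v + uv² + uv⁻¹ + u⁻²v⁻¹ + u⁻¹v⁻² + u⁻¹v)`. -/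
noncomputable def PhiG2 (u v : ℂ) : ℂ × ℂ :=
  (u + v + u * v + u⁻¹ + v⁻¹ + (u * v)⁻¹,
   u ^ 2 * v + u * v ^ 2 + u * v⁻¹ + (u ^ 2)⁻¹ * v⁻¹ + u⁻¹ * (v ^ 2)⁻¹ + u⁻¹ * v)

/-- Cleared form of the characteristic-polynomial expansion for the `Φ_{G₂}` fiber. -/
lemma expandG2aux (u v x p q : ℂ)
    (hp : p * (u * v) = u ^ 2 * v + u * v ^ 2 + u ^ 2 * v ^ 2 + u + v + 1)
    (hq : q * (u ^ 2 * v ^ 2)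
        = u ^ 4 * v ^ 3 + u ^ 3 * v ^ 4 + u ^ 3 * v + u + v + u * v ^ 3) :
    (x - u) * (x - v) * (x - u * v) * (u * x - 1) * (v * x - 1) * (u * v * x - 1)
      = (x ^ 6 - p * x ^ 5 + (q + p + 3) * x ^ 4 - (p ^ 2 - 2 * q - 4) * x ^ 3
          + (q + p + 3) * x ^ 2 - p * x + 1) * (u ^ 2 * v ^ 2) := by
  linear_combination
    (x ^ 3 + v * x ^ 3 + u * x ^ 3 + u * v * x - u * v * x ^ 2 + u * v * x ^ 3 * p
      - u * v * x ^ 4 + u * v * x ^ 5 + u * v ^ 2 * x ^ 3 + u ^ 2 * v * x ^ 3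
      + u ^ 2 * v ^ 2 * x ^ 3) * hp
    + (-x ^ 2 - 2 * x ^ 3 - x ^ 4) * hq

lemma quadG2aux (c b w : ℂ) (hc : c ≠ 0) (hb : b ≠ 0) (hw : w ≠ 0) (hc1 : c ≠ -1)
    (h : c + w + c * w + c⁻¹ + w⁻¹ + (c * w)⁻¹ = c + b + c * b + c⁻¹ + b⁻¹ + (c * b)⁻¹) :
    b = w ∨ b = (c * w)⁻¹ := by
  have key : (1 + c) * (b - w) * (c * w * b - 1) = 0 := by
    have hid : (1 + c) * (b - w) * (c * w * b - 1)
        = c * w * b * ((c + b + c * b + c⁻¹ + b⁻¹ + (c * b)⁻¹)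
            - (c + w + c * w + c⁻¹ + w⁻¹ + (c * w)⁻¹)) := by
      field_simp
      ring
    rw [hid, ← h]; ring
  have h1c : (1 : ℂ) + c ≠ 0 := fun h0 => hc1 (by linear_combination h0)
  rcases mul_eq_zero.mp key with h' | hr
  · rcases mul_eq_zero.mp h' with h'' | hl
    · exact absurd h'' h1c
    · exact Or.inl (sub_eq_zero.mp hl)
  · right
    have hcb : (c * w) * b = 1 := by linear_combination hr
    exact (inv_eq_of_mul_eq_one_right hcb).symm

lemma quartG2aux (w b : ℂ) (hw : w ≠ 0) (hb : b ≠ 0)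
    (h : w ^ 2 + (w ^ 2)⁻¹ = b ^ 2 + (b ^ 2)⁻¹) :
    b = w ∨ b = -w ∨ b = w⁻¹ ∨ b = -w⁻¹ := by
  have key : (b - w) * (b + w) * (w * b - 1) * (w * b + 1) = 0 := by
    have hid : (b - w) * (b + w) * (w * b - 1) * (w * b + 1)
        = w ^ 2 * b ^ 2 * ((b ^ 2 + (b ^ 2)⁻¹) - (w ^ 2 + (w ^ 2)⁻¹)) := by
      field_simp
      ring
    rw [hid, ← h]; ring
  rcases mul_eq_zero.mp key with h' | h4
  · rcases mul_eq_zero.mp h' with h'' | h3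
    · rcases mul_eq_zero.mp h'' with h1 | h2
      · exact Or.inl (sub_eq_zero.mp h1)
      · exact Or.inr (Or.inl (by linear_combination h2))
    · right; right; left
      have : w * b = 1 := by linear_combination h3
      exact (inv_eq_of_mul_eq_one_right this).symm
  · right; right; right
    have hwb : w * -b = 1 := by linear_combination -h4
    have := (inv_eq_of_mul_eq_one_right hwb).symm
    linear_combination -this

theorem stmt_16 (u v ut vt : ℂ) (hu : ‖u‖ = 1) (hv : ‖v‖ = 1)
    (hut : ‖ut‖ = 1) (hvt : ‖vt‖ = 1) :
    PhiG2 u v = PhiG2 ut vt ↔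
      (ut, vt) = (u, v) ∨ (ut, vt) = (v, u) ∨ (ut, vt) = (u⁻¹, v⁻¹) ∨ (ut, vt) = (v⁻¹, u⁻¹)
        ∨ (ut, vt) = (u, (u * v)⁻¹) ∨ (ut, vt) = ((u * v)⁻¹, u)
        ∨ (ut, vt) = (v, (u * v)⁻¹) ∨ (ut, vt) = ((u * v)⁻¹, v)
        ∨ (ut, vt) = (u⁻¹, u * v) ∨ (ut, vt) = (u * v, u⁻¹)
        ∨ (ut, vt) = (v⁻¹, u * v) ∨ (ut, vt) = (u * v, v⁻¹) := by
  have hu0 : u ≠ 0 := fun h => by simp [h] at hu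
  have hv0 : v ≠ 0 := fun h => by simp [h] at hv
  have hut0 : ut ≠ 0 := fun h => by simp [h] at hut
  have hvt0 : vt ≠ 0 := fun h => by simp [h] at hvt
  have huu : u * u⁻¹ = 1 := mul_inv_cancel₀ hu0
  have hvv : v * v⁻¹ = 1 := mul_inv_cancel₀ hv0
  have hgg : ut * ut⁻¹ = 1 := mul_inv_cancel₀ hut0
  have hhh : vt * vt⁻¹ = 1 := mul_inv_cancel₀ hvt0
  constructor
  · intro h
    simp only [PhiG2, Prod.mk.injEq] at h
    obtain ⟨h1, h2⟩ := h
    have hpuv : (u + v + u * v + u⁻¹ + v⁻¹ + (u * v)⁻¹) * (u * v)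
        = u ^ 2 * v + u * v ^ 2 + u ^ 2 * v ^ 2 + u + v + 1 := by
      simp only [← inv_pow, mul_inv]
      linear_combination (v + v * v⁻¹) * huu + (1 + u) * hvv
    have hquv : (u ^ 2 * v + u * v ^ 2 + u * v⁻¹ + (u ^ 2)⁻¹ * v⁻¹ + u⁻¹ * (v ^ 2)⁻¹ + u⁻¹ * v)
        * (u ^ 2 * v ^ 2)
        = u ^ 4 * v ^ 3 + u ^ 3 * v ^ 4 + u ^ 3 * v + u + v + u * v ^ 3 := by
      simp only [← inv_pow, mul_inv]
      linear_combination
        (v ^ 2 * v⁻¹ + u * v ^ 2 * v⁻¹ ^ 2 + u * v ^ 2 * u⁻¹ * v⁻¹ + u * v ^ 3) * huu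
        + (v + u + u * v * v⁻¹ + u ^ 3 * v) * hvv
    have hpab : (u + v + u * v + u⁻¹ + v⁻¹ + (u * v)⁻¹) * (ut * vt)
        = ut ^ 2 * vt + ut * vt ^ 2 + ut ^ 2 * vt ^ 2 + ut + vt + 1 := by
      rw [h1]
      simp only [← inv_pow, mul_inv]
      linear_combination (vt + vt * vt⁻¹) * hgg + (1 + ut) * hhh
    have hqab : (u ^ 2 * v + u * v ^ 2 + u * v⁻¹ + (u ^ 2)⁻¹ * v⁻¹ + u⁻¹ * (v ^ 2)⁻¹ + u⁻¹ * v)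
        * (ut ^ 2 * vt ^ 2)
        = ut ^ 4 * vt ^ 3 + ut ^ 3 * vt ^ 4 + ut ^ 3 * vt + ut + vt + ut * vt ^ 3 := by
      rw [h2]
      simp only [← inv_pow, mul_inv]
      linear_combination
        (vt ^ 2 * vt⁻¹ + ut * vt ^ 2 * vt⁻¹ ^ 2 + ut * vt ^ 2 * ut⁻¹ * vt⁻¹ + ut * vt ^ 3) * hgg
        + (vt + ut + ut * vt * vt⁻¹ + ut ^ 3 * vt) * hhh
    have k1 := expandG2aux u v ut _ _ hpuv hquv
    have k2 := expandG2aux ut vt ut _ _ hpab hqab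
    have hF : (ut ^ 6 - (u + v + u * v + u⁻¹ + v⁻¹ + (u * v)⁻¹) * ut ^ 5
        + ((u ^ 2 * v + u * v ^ 2 + u * v⁻¹ + (u ^ 2)⁻¹ * v⁻¹ + u⁻¹ * (v ^ 2)⁻¹ + u⁻¹ * v)
            + (u + v + u * v + u⁻¹ + v⁻¹ + (u * v)⁻¹) + 3) * ut ^ 4
        - ((u + v + u * v + u⁻¹ + v⁻¹ + (u * v)⁻¹) ^ 2
            - 2 * (u ^ 2 * v + u * v ^ 2 + u * v⁻¹ + (u ^ 2)⁻¹ * v⁻¹ + u⁻¹ * (v ^ 2)⁻¹ + u⁻¹ * v)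
            - 4) * ut ^ 3
        + ((u ^ 2 * v + u * v ^ 2 + u * v⁻¹ + (u ^ 2)⁻¹ * v⁻¹ + u⁻¹ * (v ^ 2)⁻¹ + u⁻¹ * v)
            + (u + v + u * v + u⁻¹ + v⁻¹ + (u * v)⁻¹) + 3) * ut ^ 2
        - (u + v + u * v + u⁻¹ + v⁻¹ + (u * v)⁻¹) * ut + 1) * (ut ^ 2 * vt ^ 2) = 0 := by
      linear_combination -k2
    have hnz : (ut ^ 2 * vt ^ 2) ≠ 0 := mul_ne_zero (pow_ne_zero _ hut0) (pow_ne_zero _ hvt0)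
    have hG := (mul_eq_zero.mp hF).resolve_right hnz
    have key : (ut - u) * (ut - v) * (ut - u * v) * (u * ut - 1) * (v * ut - 1)
        * (u * v * ut - 1) = 0 := by rw [k1, hG, zero_mul]
    clear k1 k2 hF hG hpuv hpab hqab hnz
    rcases mul_eq_zero.mp key with k | k6
    rcases mul_eq_zero.mp k with k | k5
    rcases mul_eq_zero.mp k with k | k4
    rcases mul_eq_zero.mp k with k | k3
    rcases mul_eq_zero.mp k with k1 | k2
    · -- ut = u
      have hcase : ut = u := sub_eq_zero.mp k1
      rw [hcase] at h1 h2
      by_cases hd : u = -1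
      · rw [hd] at h2
        have hb : v ^ 2 + (v ^ 2)⁻¹ = vt ^ 2 + (vt ^ 2)⁻¹ := by linear_combination -h2
        rcases quartG2aux v vt hv0 hvt0 hb with h' | h' | h' | h'
        · exact Or.inl (by rw [hcase, h'])
        · refine Or.inr (Or.inr (Or.inr (Or.inr (Or.inr (Or.inr (Or.inr (Or.inr (Or.inl ?_))))))))
          simp only [Prod.mk.injEq]
          exact ⟨by rw [hcase, hd]; norm_num, by rw [h', hd]; ring⟩
        · refine Or.inr (Or.inr (Or.inl ?_))
          simp only [Prod.mk.injEq]
          exact ⟨by rw [hcase, hd]; norm_num, h'⟩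
        · refine Or.inr (Or.inr (Or.inr (Or.inr (Or.inl ?_))))
          simp only [Prod.mk.injEq]
          exact ⟨hcase, by rw [h', hd, mul_inv]; norm_num⟩
      · rcases quadG2aux u vt v hu0 hvt0 hv0 hd h1 with h' | h'
        · exact Or.inl (by rw [hcase, h'])
        · refine Or.inr (Or.inr (Or.inr (Or.inr (Or.inl ?_))))
          simp only [Prod.mk.injEq]
          exact ⟨hcase, h'⟩
    · -- ut = v
      have hcase : ut = v := sub_eq_zero.mp k2
      rw [hcase] at h1 h2
      have h1' : v + u + v * u + v⁻¹ + u⁻¹ + (v * u)⁻¹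
          = v + vt + v * vt + v⁻¹ + vt⁻¹ + (v * vt)⁻¹ := by
        rw [mul_comm v u]; linear_combination h1
      by_cases hd : v = -1
      · rw [hd] at h2
        have hb : u ^ 2 + (u ^ 2)⁻¹ = vt ^ 2 + (vt ^ 2)⁻¹ := by linear_combination -h2
        rcases quartG2aux u vt hu0 hvt0 hb with h' | h' | h' | h'
        · exact Or.inr (Or.inl (by rw [hcase, h']))
        · refine Or.inr (Or.inr (Or.inr (Or.inr (Or.inr (Or.inr (Or.inr (Or.inr (Or.inr (Or.inr (Or.inl ?_))))))))))
          simp only [Prod.mk.injEq]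
          exact ⟨by rw [hcase, hd]; norm_num, by rw [h', hd]; ring⟩
        · refine Or.inr (Or.inr (Or.inr (Or.inl ?_)))
          simp only [Prod.mk.injEq]
          exact ⟨by rw [hcase, hd]; norm_num, h'⟩
        · refine Or.inr (Or.inr (Or.inr (Or.inr (Or.inr (Or.inr (Or.inl ?_))))))
          simp only [Prod.mk.injEq]
          exact ⟨hcase, by rw [h', hd, mul_inv]; norm_num⟩
      · rcases quadG2aux v vt u hv0 hvt0 hu0 hd h1' with h' | h'
        · exact Or.inr (Or.inl (by rw [hcase, h']))
        · rw [mul_comm v u] at h'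
          refine Or.inr (Or.inr (Or.inr (Or.inr (Or.inr (Or.inr (Or.inl ?_))))))
          simp only [Prod.mk.injEq]
          exact ⟨hcase, h'⟩
    · -- ut = u * v
      have hcase : ut = u * v := sub_eq_zero.mp k3
      rw [hcase] at h1 h2
      have h1' : u * v + u⁻¹ + u * v * u⁻¹ + (u * v)⁻¹ + u⁻¹⁻¹ + (u * v * u⁻¹)⁻¹
          = u * v + vt + u * v * vt + (u * v)⁻¹ + vt⁻¹ + (u * v * vt)⁻¹ := by
        have E3 : u * v + u⁻¹ + u * v * u⁻¹ + (u * v)⁻¹ + u⁻¹⁻¹ + (u * v * u⁻¹)⁻¹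
            = u + v + u * v + u⁻¹ + v⁻¹ + (u * v)⁻¹ := by
          simp only [mul_inv, inv_inv]
          linear_combination (v + v⁻¹) * huu
        exact E3.trans h1
      by_cases hd : u * v = -1
      · rw [hd] at h2
        have huv2 : u ^ 2 * v ^ 2 = 1 := by
          rw [show u ^ 2 * v ^ 2 = (u * v) ^ 2 by ring, hd]; norm_num
        have h3 : (u ^ 2)⁻¹ = v ^ 2 := inv_eq_of_mul_eq_one_right huv2
        have hQL : u ^ 2 * v + u * v ^ 2 + u * v⁻¹ + (u ^ 2)⁻¹ * v⁻¹ + u⁻¹ * (v ^ 2)⁻¹ + u⁻¹ * v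
            = -(u ^ 2 + (u ^ 2)⁻¹) := by
          have c2 : u ^ 2 * v + u * v ^ 2 + u * v⁻¹ + (u ^ 2)⁻¹ * v⁻¹ + u⁻¹ * (v ^ 2)⁻¹ + u⁻¹ * v
              = (u ^ 2 * v + u * v ^ 2 + u * v⁻¹ + (u ^ 2)⁻¹ * v⁻¹ + u⁻¹ * (v ^ 2)⁻¹ + u⁻¹ * v)
                * (u ^ 2 * v ^ 2) := by rw [huv2, mul_one]
          rw [c2, hquv, h3]
          linear_combination (u ^ 3 * v ^ 2 + u ^ 2 * v ^ 3 - u ^ 2 * v + u ^ 2 - u * v ^ 2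
            + u + v ^ 2 + v) * hd
        rw [hQL] at h2
        have hb : u ^ 2 + (u ^ 2)⁻¹ = vt ^ 2 + (vt ^ 2)⁻¹ := by linear_combination -h2
        have hvinv : v⁻¹ = -u := inv_eq_of_mul_eq_one_left (by linear_combination -hd)
        have hv' : v = -u⁻¹ := by rw [← inv_inv v, hvinv, inv_neg]
        rcases quartG2aux u vt hu0 hvt0 hb with h' | h' | h' | h'
        · refine Or.inr (Or.inr (Or.inr (Or.inr (Or.inr (Or.inl ?_)))))
          simp only [Prod.mk.injEq]
          exact ⟨by rw [hcase, hd]; norm_num, h'⟩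
        · refine Or.inr (Or.inr (Or.inr (Or.inr (Or.inr (Or.inr (Or.inr (Or.inr (Or.inr (Or.inr (Or.inr ?_))))))))))
          simp only [Prod.mk.injEq]
          exact ⟨hcase, by rw [h', hvinv]⟩
        · refine Or.inr (Or.inr (Or.inr (Or.inr (Or.inr (Or.inr (Or.inr (Or.inr (Or.inr (Or.inl ?_)))))))))
          simp only [Prod.mk.injEq]
          exact ⟨hcase, h'⟩
        · refine Or.inr (Or.inr (Or.inr (Or.inr (Or.inr (Or.inr (Or.inr (Or.inl ?_)))))))
          simp only [Prod.mk.injEq]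
          exact ⟨by rw [hcase, hd]; norm_num, by rw [h', hv']⟩
      · rcases quadG2aux (u * v) vt u⁻¹ (mul_ne_zero hu0 hv0) hvt0 (inv_ne_zero hu0) hd h1'
          with h' | h'
        · refine Or.inr (Or.inr (Or.inr (Or.inr (Or.inr (Or.inr (Or.inr (Or.inr (Or.inr (Or.inl ?_)))))))))
          simp only [Prod.mk.injEq]
          exact ⟨hcase, h'⟩
        · have e : (u * v * u⁻¹)⁻¹ = v⁻¹ := by
            simp only [mul_inv, inv_inv]
            linear_combination v⁻¹ * huu
          rw [e] at h'
          refine Or.inr (Or.inr (Or.inr (Or.inr (Or.inr (Or.inr (Or.inr (Or.inr (Or.inr (Or.inr (Or.inr ?_))))))))))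
          simp only [Prod.mk.injEq]
          exact ⟨hcase, h'⟩
    · -- ut = u⁻¹
      have hcase : ut = u⁻¹ := (inv_eq_of_mul_eq_one_right (by linear_combination k4)).symm
      rw [hcase] at h1 h2
      have h1' : u⁻¹ + v⁻¹ + u⁻¹ * v⁻¹ + u⁻¹⁻¹ + v⁻¹⁻¹ + (u⁻¹ * v⁻¹)⁻¹
          = u⁻¹ + vt + u⁻¹ * vt + u⁻¹⁻¹ + vt⁻¹ + (u⁻¹ * vt)⁻¹ := by
        have E4 : u⁻¹ + v⁻¹ + u⁻¹ * v⁻¹ + u⁻¹⁻¹ + v⁻¹⁻¹ + (u⁻¹ * v⁻¹)⁻¹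
            = u + v + u * v + u⁻¹ + v⁻¹ + (u * v)⁻¹ := by
          simp only [mul_inv, inv_inv]; ring
        exact E4.trans h1
      by_cases hd : u = -1
      · rw [hd] at h2
        have hb : v ^ 2 + (v ^ 2)⁻¹ = vt ^ 2 + (vt ^ 2)⁻¹ := by linear_combination -h2
        rcases quartG2aux v vt hv0 hvt0 hb with h' | h' | h' | h'
        · refine Or.inl ?_
          simp only [Prod.mk.injEq]
          exact ⟨by rw [hcase, hd]; norm_num, h'⟩
        · refine Or.inr (Or.inr (Or.inr (Or.inr (Or.inr (Or.inr (Or.inr (Or.inr (Or.inl ?_))))))))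
          simp only [Prod.mk.injEq]
          exact ⟨hcase, by rw [h', hd]; ring⟩
        · refine Or.inr (Or.inr (Or.inl ?_))
          simp only [Prod.mk.injEq]
          exact ⟨hcase, h'⟩
        · refine Or.inr (Or.inr (Or.inr (Or.inr (Or.inl ?_))))
          simp only [Prod.mk.injEq]
          exact ⟨by rw [hcase, hd]; norm_num, by rw [h', hd, mul_inv]; norm_num⟩
      · have hd' : u⁻¹ ≠ -1 := fun hh => hd (by rw [← inv_inv u, hh]; norm_num)
        rcases quadG2aux u⁻¹ vt v⁻¹ (inv_ne_zero hu0) hvt0 (inv_ne_zero hv0) hd' h1' with h' | h'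
        · refine Or.inr (Or.inr (Or.inl ?_))
          simp only [Prod.mk.injEq]
          exact ⟨hcase, h'⟩
        · have e : (u⁻¹ * v⁻¹)⁻¹ = u * v := by simp only [mul_inv, inv_inv]
          rw [e] at h'
          refine Or.inr (Or.inr (Or.inr (Or.inr (Or.inr (Or.inr (Or.inr (Or.inr (Or.inl ?_))))))))
          simp only [Prod.mk.injEq]
          exact ⟨hcase, h'⟩
    · -- ut = v⁻¹
      have hcase : ut = v⁻¹ := (inv_eq_of_mul_eq_one_right (by linear_combination k5)).symm
      rw [hcase] at h1 h2
      have h1' : v⁻¹ + u⁻¹ + v⁻¹ * u⁻¹ + v⁻¹⁻¹ + u⁻¹⁻¹ + (v⁻¹ * u⁻¹)⁻¹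
          = v⁻¹ + vt + v⁻¹ * vt + v⁻¹⁻¹ + vt⁻¹ + (v⁻¹ * vt)⁻¹ := by
        have E5 : v⁻¹ + u⁻¹ + v⁻¹ * u⁻¹ + v⁻¹⁻¹ + u⁻¹⁻¹ + (v⁻¹ * u⁻¹)⁻¹
            = u + v + u * v + u⁻¹ + v⁻¹ + (u * v)⁻¹ := by
          simp only [mul_inv, inv_inv]; ring
        exact E5.trans h1
      by_cases hd : v = -1
      · rw [hd] at h2
        have hb : u ^ 2 + (u ^ 2)⁻¹ = vt ^ 2 + (vt ^ 2)⁻¹ := by linear_combination -h2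
        rcases quartG2aux u vt hu0 hvt0 hb with h' | h' | h' | h'
        · refine Or.inr (Or.inl ?_)
          simp only [Prod.mk.injEq]
          exact ⟨by rw [hcase, hd]; norm_num, h'⟩
        · refine Or.inr (Or.inr (Or.inr (Or.inr (Or.inr (Or.inr (Or.inr (Or.inr (Or.inr (Or.inr (Or.inl ?_))))))))))
          simp only [Prod.mk.injEq]
          exact ⟨hcase, by rw [h', hd]; ring⟩
        · refine Or.inr (Or.inr (Or.inr (Or.inl ?_)))
          simp only [Prod.mk.injEq]
          exact ⟨hcase, h'⟩
        · refine Or.inr (Or.inr (Or.inr (Or.inr (Or.inr (Or.inr (Or.inl ?_))))))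
          simp only [Prod.mk.injEq]
          exact ⟨by rw [hcase, hd]; norm_num, by rw [h', hd, mul_inv]; norm_num⟩
      · have hd' : v⁻¹ ≠ -1 := fun hh => hd (by rw [← inv_inv v, hh]; norm_num)
        rcases quadG2aux v⁻¹ vt u⁻¹ (inv_ne_zero hv0) hvt0 (inv_ne_zero hu0) hd' h1' with h' | h'
        · refine Or.inr (Or.inr (Or.inr (Or.inl ?_)))
          simp only [Prod.mk.injEq]
          exact ⟨hcase, h'⟩
        · have e : (v⁻¹ * u⁻¹)⁻¹ = u * v := by simp only [mul_inv, inv_inv]; ring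
          rw [e] at h'
          refine Or.inr (Or.inr (Or.inr (Or.inr (Or.inr (Or.inr (Or.inr (Or.inr (Or.inr (Or.inr (Or.inl ?_))))))))))
          simp only [Prod.mk.injEq]
          exact ⟨hcase, h'⟩
    · -- ut = (u * v)⁻¹
      have hcase : ut = (u * v)⁻¹ := (inv_eq_of_mul_eq_one_right (by linear_combination k6)).symm
      rw [hcase] at h1 h2
      have h1' : (u * v)⁻¹ + u + (u * v)⁻¹ * u + (u * v)⁻¹⁻¹ + u⁻¹ + ((u * v)⁻¹ * u)⁻¹
          = (u * v)⁻¹ + vt + (u * v)⁻¹ * vt + (u * v)⁻¹⁻¹ + vt⁻¹ + ((u * v)⁻¹ * vt)⁻¹ := by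
        have E6 : (u * v)⁻¹ + u + (u * v)⁻¹ * u + (u * v)⁻¹⁻¹ + u⁻¹ + ((u * v)⁻¹ * u)⁻¹
            = u + v + u * v + u⁻¹ + v⁻¹ + (u * v)⁻¹ := by
          simp only [mul_inv, inv_inv]
          linear_combination (v + v⁻¹) * huu
        exact E6.trans h1
      by_cases hd : u * v = -1
      · rw [hd] at h2
        have huv2 : u ^ 2 * v ^ 2 = 1 := by
          rw [show u ^ 2 * v ^ 2 = (u * v) ^ 2 by ring, hd]; norm_num
        have h3 : (u ^ 2)⁻¹ = v ^ 2 := inv_eq_of_mul_eq_one_right huv2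
        have hQL : u ^ 2 * v + u * v ^ 2 + u * v⁻¹ + (u ^ 2)⁻¹ * v⁻¹ + u⁻¹ * (v ^ 2)⁻¹ + u⁻¹ * v
            = -(u ^ 2 + (u ^ 2)⁻¹) := by
          have c2 : u ^ 2 * v + u * v ^ 2 + u * v⁻¹ + (u ^ 2)⁻¹ * v⁻¹ + u⁻¹ * (v ^ 2)⁻¹ + u⁻¹ * v
              = (u ^ 2 * v + u * v ^ 2 + u * v⁻¹ + (u ^ 2)⁻¹ * v⁻¹ + u⁻¹ * (v ^ 2)⁻¹ + u⁻¹ * v)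
                * (u ^ 2 * v ^ 2) := by rw [huv2, mul_one]
          rw [c2, hquv, h3]
          linear_combination (u ^ 3 * v ^ 2 + u ^ 2 * v ^ 3 - u ^ 2 * v + u ^ 2 - u * v ^ 2
            + u + v ^ 2 + v) * hd
        rw [hQL] at h2
        have hb : u ^ 2 + (u ^ 2)⁻¹ = vt ^ 2 + (vt ^ 2)⁻¹ := by linear_combination -h2
        have hvinv : v⁻¹ = -u := inv_eq_of_mul_eq_one_left (by linear_combination -hd)
        have hv' : v = -u⁻¹ := by rw [← inv_inv v, hvinv, inv_neg]
        rcases quartG2aux u vt hu0 hvt0 hb with h' | h' | h' | h'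
        · refine Or.inr (Or.inr (Or.inr (Or.inr (Or.inr (Or.inl ?_)))))
          simp only [Prod.mk.injEq]
          exact ⟨hcase, h'⟩
        · refine Or.inr (Or.inr (Or.inr (Or.inr (Or.inr (Or.inr (Or.inr (Or.inr (Or.inr (Or.inr (Or.inr ?_))))))))))
          simp only [Prod.mk.injEq]
          exact ⟨by rw [hcase, hd]; norm_num, by rw [h', hvinv]⟩
        · refine Or.inr (Or.inr (Or.inr (Or.inr (Or.inr (Or.inr (Or.inr (Or.inr (Or.inr (Or.inl ?_)))))))))
          simp only [Prod.mk.injEq]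
          exact ⟨by rw [hcase, hd]; norm_num, h'⟩
        · refine Or.inr (Or.inr (Or.inr (Or.inr (Or.inr (Or.inr (Or.inr (Or.inl ?_)))))))
          simp only [Prod.mk.injEq]
          exact ⟨hcase, by rw [h', hv']⟩
      · have hd' : (u * v)⁻¹ ≠ -1 := fun hh => hd (by rw [← inv_inv (u * v), hh]; norm_num)
        rcases quadG2aux ((u * v)⁻¹) vt u (inv_ne_zero (mul_ne_zero hu0 hv0)) hvt0 hu0 hd' h1'
          with h' | h'
        · refine Or.inr (Or.inr (Or.inr (Or.inr (Or.inr (Or.inl ?_)))))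
          simp only [Prod.mk.injEq]
          exact ⟨hcase, h'⟩
        · have e : ((u * v)⁻¹ * u)⁻¹ = v := by
            simp only [mul_inv, inv_inv]
            linear_combination v * huu
          rw [e] at h'
          refine Or.inr (Or.inr (Or.inr (Or.inr (Or.inr (Or.inr (Or.inr (Or.inl ?_)))))))
          simp only [Prod.mk.injEq]
          exact ⟨hcase, h'⟩
  · intro h
    rcases h with h | h | h | h | h | h | h | h | h | h | h | h <;>
      (rw [Prod.mk.injEq] at h; obtain ⟨ha, hb⟩ := h; rw [ha, hb]) <;>
      simp only [PhiG2, Prod.mk.injEq] <;>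
      constructor <;>
      simp only [← inv_pow, mul_inv, inv_inv] <;>
      first
      | ring1
      | linear_combination (-v⁻¹ - v) * huu
      | linear_combination (-(u⁻¹ * v⁻¹ ^ 2) - v * u⁻¹ - u * v⁻¹ - u * v ^ 2) * huu
      | linear_combination (-u⁻¹ - u) * hvv
      | linear_combination (-(u⁻¹ ^ 2 * v⁻¹) - v * u⁻¹ - u * v⁻¹ - u ^ 2 * v) * hvv
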